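/- Let $\Delta$ be a finite root system with Weyl group $W$ and fix $\alpha \in \Delta_+$ and $w \in W$ with $w \ne e$ and $w \ne s_\alpha$ and $w^{-1}(\alpha) \in \Delta_+$. Let $C^w$ be the closed convex cone generated by $\{\beta \in \Delta_+ : w^{-1}(\beta) \in \Delta_-\}$. Then $\alpha \notin C^w$ and $-\alpha \notin C^w$. -/

import Mathlib

/-!
STATEMENT 9: for `w ∈ W`, `w ≠ e, s_α`, with `w⁻¹(α) ∈ Δ₊`, the root `α` is not in
`± C^w`, where `C^w` is the closed convex cone generated by the positive roots sent to
negative roots by `w⁻¹`.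
-/

open scoped RealInnerProductSpace

/-- **`α ∉ ± C^w`** (key step in Proposition 4.3 of the paper). -/
theorem stmt9 {V : Type*} [NormedAddCommGroup V] [InnerProductSpace ℝ V]
    [FiniteDimensional ℝ V] [DecidableEq V]
    -- the positive roots of the finite root system
    (Δp : Finset V) (hne : ∀ β ∈ Δp, β ≠ 0)
    (hnegdisj : ∀ β ∈ Δp, -β ∉ Δp)
    -- the positive roots lie in an open half space
    (φ : V →ₗ[ℝ] ℝ) (hφ : ∀ β ∈ Δp, 0 < φ β)
    -- the Weyl group, generated by the reflections in the roots
    (W : Subgroup (V ≃ₗᵢ[ℝ] V))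
    (hW : W = Subgroup.closure
      {g : V ≃ₗᵢ[ℝ] V | ∃ α ∈ Δp, g = Submodule.reflection ((ℝ ∙ α)ᗮ)})
    (hInv : ∀ g ∈ W, ∀ β ∈ Δp, g β ∈ Δp ∨ -(g β) ∈ Δp)
    (α : V) (hα : α ∈ Δp)
    (w : V ≃ₗᵢ[ℝ] V) (hwW : w ∈ W)
    (hw1 : w ≠ 1) (hws : w ≠ Submodule.reflection ((ℝ ∙ α)ᗮ))
    (hwα : w.symm α ∈ Δp)
    -- the closed convex cone generated by `{β ∈ Δ₊ : w⁻¹(β) ∈ Δ₋}`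
    (Cw : Set V)
    (hCw : Cw = {v : V | ∃ c : V → ℝ, (∀ β, 0 ≤ c β) ∧
      v = ∑ β ∈ Δp.filter (fun β => -(w.symm β) ∈ Δp), c β • β}) :
    α ∉ Cw ∧ -α ∉ Cw := by
  subst hCw
  constructor
  · rintro ⟨c, hc, hsum⟩
    have h1 : 0 < φ (w.symm α) := hφ _ hwα
    have h2 : φ (w.symm α) ≤ 0 := by
      have heq : w.symm α = ∑ β ∈ Δp.filter (fun β => -(w.symm β) ∈ Δp),
          c β • w.symm β := by
        rw [hsum, map_sum]
        simp [map_smul]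
      rw [heq, map_sum]
      apply Finset.sum_nonpos
      intro β hβ
      simp only [Finset.mem_filter] at hβ
      have h3 : 0 < φ (-(w.symm β)) := hφ _ hβ.2
      rw [map_neg] at h3
      have h4 : φ (w.symm β) ≤ 0 := by linarith
      have := hc β
      rw [map_smul, smul_eq_mul]
      nlinarith
    linarith
  · rintro ⟨c, hc, hsum⟩
    have h1 : 0 < φ α := hφ _ hα
    have h2 : 0 ≤ φ (-α) := by
      rw [hsum, map_sum]
      apply Finset.sum_nonneg
      intro β hβ
      simp only [Finset.mem_filter] at hβ
      have := hφ _ hβ.1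
      have := hc β
      rw [map_smul, smul_eq_mul]
      positivity
    rw [map_neg] at h2
    linarith
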